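/- The map Flip: MS_n → MS_n, which sends each segment [a,b] to [n+1-b, n+1-a], is an involution on multisegments which intertwines the crystal operators: Flip(f_i(M)) = f*_{n+1-i}(Flip(M)) and Flip(e_i(M)) = e*_{n+1-i}(Flip(M)) for all M and all i. -/

import Mathlib

/-- A segment `[a,b]` is a pair of integers. -/
abbrev Seg : Type := ℕ × ℕ

/-- A multisegment is a finite multiset of segments. -/
abbrev MS : Type := Multiset Seg

/-- `M ∈ MS_n`: all segments `[a,b]` satisfy `1 ≤ a ≤ b ≤ n`. -/
def IsMS (n : ℕ) (M : MS) : Prop := ∀ s ∈ M, 1 ≤ s.1 ∧ s.1 ≤ s.2 ∧ s.2 ≤ n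

/-- A bracket: `op` = "(", `cl` = ")". -/
inductive Br | op | cl
deriving DecidableEq

/-- One step of the left-to-right bracket cancellation procedure.  The state
`(cls, ops)` records the tags of the currently uncanceled ")" (in order) and the
currently uncanceled "(" (in order).  A new "(" is appended to `ops`; a new ")"
cancels the last uncanceled "(" if there is one, and otherwise is appended to `cls`. -/
def step {τ : Type} : (List τ × List τ) → (Br × τ) → (List τ × List τ)
  | (cls, ops), (Br.op, s) => (cls, ops ++ [s])
  | (cls, ops), (Br.cl, s) => if ops.isEmpty then (cls ++ [s], ops) else (cls, ops.dropLast)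

/-- Process a tagged bracket string; the result `(cls, ops)` lists the tags of the
uncanceled ")" and the uncanceled "(" (left to right).  The reduced (uncanceled)
string is `")"^cls.length ++ "("^ops.length`. -/
def scan {τ : Type} (l : List (Br × τ)) : List τ × List τ := l.foldl step ([], [])

/-- Number of uncanceled ")" in a tagged bracket string. -/
def urStr {τ : Type} (l : List (Br × τ)) : ℕ := (scan l).1.length

/-- Number of uncanceled "(" in a tagged bracket string. -/
def epsStr {τ : Type} (l : List (Br × τ)) : ℕ := (scan l).2.length

/-- Tag of the rightmost uncanceled ")", if any. -/
def lastCl {τ : Type} (l : List (Br × τ)) : Option τ := (scan l).1.getLast?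

/-- Tag of the leftmost uncanceled "(", if any. -/
def headOp {τ : Type} (l : List (Br × τ)) : Option τ := (scan l).2.head?

/-- The string `S_i(M)`: segments are ordered by increasing height, then by
decreasing lower endpoint; each `[h,i]` contributes "(" and each `[h,i-1]`
contributes ")".  In the block of segments of height `t` the "(" over the
`[i-t+1, i]` segments come immediately before the ")" over the `[i-t, i-1]`
segments, and blocks appear for `t = 1, 2, …`. -/
def Si (M : MS) (i : ℕ) : List (Br × Seg) :=
  (List.range i).flatMap fun t0 =>
    let t := t0 + 1
    List.replicate (M.count (i - t + 1, i)) (Br.op, ((i - t + 1 : ℕ), i)) ++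
    List.replicate (M.count (i - t, i - 1)) (Br.cl, ((i - t : ℕ), i - 1))

/-- The string `S_i^*(M)`: segments ordered by increasing height, then by
increasing lower endpoint; each `[i,j]` contributes "(" and each `[i+1,j]`
contributes ")".  In the block of height `t` the "(" below the `[i, i+t-1]`
segments come immediately before the ")" below the `[i+1, i+t]` segments. -/
def SiStar (n : ℕ) (M : MS) (i : ℕ) : List (Br × Seg) :=
  (List.range n).flatMap fun t0 =>
    let t := t0 + 1
    List.replicate (M.count (i, i + t - 1)) (Br.op, (i, i + t - 1)) ++
    List.replicate (M.count (i + 1, i + t)) (Br.cl, (i + 1, i + t))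

/-- The crystal operator `f_i` on multisegments: it changes the segment `[h,i-1]`
under the rightmost uncanceled ")" of `S_i(M)` into `[h,i]`, or adds a new
segment `[i,i]` if there is no uncanceled ")". -/
def fM (i : ℕ) (M : MS) : MS :=
  match lastCl (Si M i) with
  | some s => M.erase s + {(s.1, i)}
  | none => M + {(i, i)}

/-- The crystal operator `e_i` on multisegments: it changes the segment `[h,i]`
under the leftmost uncanceled "(" of `S_i(M)` into `[h,i-1]` (deleting it when
`h = i`), or returns `none` (i.e. `0`) if there is no uncanceled "(". -/
def eM (i : ℕ) (M : MS) : Option MS :=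
  match headOp (Si M i) with
  | some s => some (if s.1 = i then M.erase s else M.erase s + {(s.1, i - 1)})
  | none => none

/-- The operator `f_i^*`: it changes the segment `[i+1,j]` under the rightmost
uncanceled ")" of `S_i^*(M)` into `[i,j]`, or adds `[i,i]` if there is none. -/
def fMStar (n i : ℕ) (M : MS) : MS :=
  match lastCl (SiStar n M i) with
  | some s => M.erase s + {(i, s.2)}
  | none => M + {(i, i)}

/-- The operator `e_i^*`: it changes the segment `[i,j]` under the leftmost
uncanceled "(" of `S_i^*(M)` into `[i+1,j]` (deleting it when `j = i`), or
returns `none` if there is no uncanceled "(". -/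
def eMStar (n i : ℕ) (M : MS) : Option MS :=
  match headOp (SiStar n M i) with
  | some s => some (if s.2 = i then M.erase s else M.erase s + {(i + 1, s.2)})
  | none => none

/-- The number of boxes labeled `j` in `M`: each segment `[a,b]` contains one
box labeled `j` for each `a ≤ j ≤ b`. -/
def boxes (M : MS) (j : ℕ) : ℕ :=
  (M.filter (fun s => s.1 ≤ j ∧ j ≤ s.2)).card

/-- The pairing `⟨wt(M), α_i^∨⟩ = #(boxes i-1) + #(boxes i+1) - 2 #(boxes i)`. -/
def wtPair (M : MS) (i : ℕ) : ℤ :=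
  (boxes M (i - 1) : ℤ) + (boxes M (i + 1) : ℤ) - 2 * (boxes M i : ℤ)


/-- The map `Flip : MS_n → MS_n` sending each segment `[a,b]` to `[n+1-b, n+1-a]`. -/
def flipMS (n : ℕ) (M : MS) : MS := M.map (fun s => (n + 1 - s.2, n + 1 - s.1))


namespace Stmt12Aux

/-- The flip of a single segment. -/
def flip (n : ℕ) (s : Seg) : Seg := (n + 1 - s.2, n + 1 - s.1)

lemma flipMS_eq (n : ℕ) (M : MS) : flipMS n M = M.map (flip n) := rfl

lemma map_erase' {α β : Type} [DecidableEq α] [DecidableEq β] (f : α → β) {s : α} {M : Multiset α}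
    (h : s ∈ M) : (M.map f).erase (f s) = (M.erase s).map f := by
  conv_lhs => rw [← Multiset.cons_erase h]
  rw [Multiset.map_cons, Multiset.erase_cons_head]

lemma foldl_map {τ τ' : Type} (f : τ → τ') (l : List (Br × τ)) (cls ops : List τ) :
    (l.map (fun p => (p.1, f p.2))).foldl step (cls.map f, ops.map f)
      = ((l.foldl step (cls, ops)).1.map f, (l.foldl step (cls, ops)).2.map f) := by
  induction l generalizing cls ops with
  | nil => simp
  | cons hd t ih =>
    obtain ⟨b, s⟩ := hd
    cases b with
    | op =>
      rw [List.map_cons, List.foldl_cons, List.foldl_cons]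
      have := ih cls (ops ++ [s])
      rw [List.map_append, List.map_singleton] at this
      exact this
    | cl =>
      rw [List.map_cons, List.foldl_cons, List.foldl_cons]
      by_cases he : ops = []
      · subst he
        have := ih (cls ++ [s]) []
        rw [List.map_append, List.map_singleton] at this
        exact this
      · have h1 : ops.isEmpty = false := by simpa using he
        have h2 : (ops.map f).isEmpty = false := by simp [he]
        rw [show step (cls.map f, ops.map f) (Br.cl, f s) = (cls.map f, (ops.map f).dropLast) from by
              simp [step, h2],
            show step (cls, ops) (Br.cl, s) = (cls, ops.dropLast) from by simp [step, h1],
            ← List.map_dropLast]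
        exact ih cls ops.dropLast

lemma scan_map {τ τ' : Type} (f : τ → τ') (l : List (Br × τ)) :
    scan (l.map (fun p => (p.1, f p.2))) = ((scan l).1.map f, (scan l).2.map f) := by
  simpa [scan] using foldl_map f l [] []

lemma foldl_mem {τ : Type} (l : List (Br × τ)) (cls ops : List τ) :
    (∀ x ∈ (l.foldl step (cls, ops)).1, x ∈ cls ∨ (Br.cl, x) ∈ l) ∧
    (∀ x ∈ (l.foldl step (cls, ops)).2, x ∈ ops ∨ (Br.op, x) ∈ l) := by
  induction l generalizing cls ops with
  | nil => simp
  | cons hd t ih =>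
    obtain ⟨b, s⟩ := hd
    cases b with
    | op =>
      obtain ⟨ih1, ih2⟩ := ih cls (ops ++ [s])
      refine ⟨fun x hx => ?_, fun x hx => ?_⟩
      · rcases ih1 x (by simpa [step] using hx) with h | h
        · exact Or.inl h
        · exact Or.inr (List.mem_cons_of_mem _ h)
      · rcases ih2 x (by simpa [step] using hx) with h | h
        · rcases List.mem_append.mp h with h | h
          · exact Or.inl h
          · simp only [List.mem_singleton] at h; subst h
            exact Or.inr (List.mem_cons_self)
        · exact Or.inr (List.mem_cons_of_mem _ h)
    | cl =>
      by_cases he : ops.isEmpty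
      · obtain ⟨ih1, ih2⟩ := ih (cls ++ [s]) ops
        refine ⟨fun x hx => ?_, fun x hx => ?_⟩
        · rcases ih1 x (by simpa [step, he] using hx) with h | h
          · rcases List.mem_append.mp h with h | h
            · exact Or.inl h
            · simp only [List.mem_singleton] at h; subst h
              exact Or.inr (List.mem_cons_self)
          · exact Or.inr (List.mem_cons_of_mem _ h)
        · rcases ih2 x (by simpa [step, he] using hx) with h | h
          · exact Or.inl h
          · exact Or.inr (List.mem_cons_of_mem _ h)
      · have h1 : ops.isEmpty = false := by simpa using he
        obtain ⟨ih1, ih2⟩ := ih cls ops.dropLast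
        refine ⟨fun x hx => ?_, fun x hx => ?_⟩
        · rcases ih1 x (by simpa [step, h1] using hx) with h | h
          · exact Or.inl h
          · exact Or.inr (List.mem_cons_of_mem _ h)
        · rcases ih2 x (by simpa [step, h1] using hx) with h | h
          · exact Or.inl ((List.dropLast_sublist ops).subset h)
          · exact Or.inr (List.mem_cons_of_mem _ h)

lemma lastCl_mem {τ : Type} {l : List (Br × τ)} {s : τ} (h : lastCl l = some s) :
    (Br.cl, s) ∈ l := by
  have hm : s ∈ (scan l).1 := List.mem_of_getLast? h
  rcases (foldl_mem l [] []).1 s hm with h | h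
  · simp at h
  · exact h

lemma headOp_mem {τ : Type} {l : List (Br × τ)} {s : τ} (h : headOp l = some s) :
    (Br.op, s) ∈ l := by
  have hm : s ∈ (scan l).2 := List.mem_of_mem_head? (Option.mem_def.mpr h)
  rcases (foldl_mem l [] []).2 s hm with h | h
  · simp at h
  · exact h

lemma mem_Si {M : MS} {i : ℕ} {b : Br} {s : Seg} (h : (b, s) ∈ Si M i) : s ∈ M := by
  simp only [Si, List.mem_flatMap, List.mem_append, List.mem_replicate, List.mem_range] at h
  obtain ⟨t0, _, (⟨hc, he⟩ | ⟨hc, he⟩)⟩ := h <;>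
  · obtain ⟨-, rfl⟩ := Prod.mk.injEq .. ▸ he
    exact Multiset.count_pos.mp (Nat.pos_of_ne_zero hc)

lemma count_flip {n : ℕ} {M : MS} (hM : IsMS n M) {q : Seg} (hq1 : 1 ≤ q.1)
    (hq2 : q.1 ≤ q.2) (hq3 : q.2 ≤ n) :
    (flipMS n M).count (flip n q) = M.count q := by
  rw [flipMS_eq, Multiset.count_map, Multiset.count, Multiset.countP_eq_card_filter]
  congr 1
  apply Multiset.filter_congr
  intro x hx
  obtain ⟨h1, h2, h3⟩ := hM x hx
  constructor
  · intro h
    have ha : n + 1 - q.2 = n + 1 - x.2 := congrArg Prod.fst h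
    have hb : n + 1 - q.1 = n + 1 - x.1 := congrArg Prod.snd h
    exact Prod.ext_iff.mpr ⟨by omega, by omega⟩
  · intro h; rw [h]

lemma count_flip_high {n : ℕ} {M : MS} (hM : IsMS n M) {p : Seg} (hp : n + 1 ≤ p.2) :
    (flipMS n M).count p = 0 := by
  rw [flipMS_eq, Multiset.count_eq_zero]
  intro hc
  rw [Multiset.mem_map] at hc
  obtain ⟨x, hx, he⟩ := hc
  obtain ⟨h1, h2, h3⟩ := hM x hx
  have : n + 1 - x.1 = p.2 := congrArg Prod.snd he
  omega

lemma count_zero_invalid {n : ℕ} {M : MS} (hM : IsMS n M) {q : Seg} (hq : q.1 = 0) :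
    M.count q = 0 := by
  rw [Multiset.count_eq_zero]
  intro hc
  have := (hM q hc).1
  omega

lemma SiStar_flip {n : ℕ} {M : MS} (hM : IsMS n M) {i : ℕ} (hi : 1 ≤ i) (hin : i ≤ n) :
    SiStar n (flipMS n M) (n + 1 - i) = (Si M i).map (fun p => (p.1, flip n p.2)) := by
  unfold SiStar Si
  rw [List.map_flatMap]
  rw [show List.range n = List.range i ++ List.map (i + ·) (List.range (n - i)) from by
    rw [← List.range_add]; congr 1; omega]
  rw [List.flatMap_append]
  have h2 : (List.map (i + ·) (List.range (n - i))).flatMap (fun t0 =>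
      let t := t0 + 1
      List.replicate ((flipMS n M).count (n + 1 - i, n + 1 - i + t - 1)) (Br.op, ((n + 1 - i : ℕ), n + 1 - i + t - 1)) ++
      List.replicate ((flipMS n M).count (n + 1 - i + 1, n + 1 - i + t)) (Br.cl, ((n + 1 - i + 1 : ℕ), n + 1 - i + t))) = [] := by
    rw [List.flatMap_eq_nil_iff]
    intro x hx
    simp only [List.mem_map, List.mem_range] at hx
    obtain ⟨k, hk, rfl⟩ := hx
    have c1 : (flipMS n M).count (n + 1 - i, n + 1 - i + (i + k + 1) - 1) = 0 :=
      count_flip_high hM (by simp; omega)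
    have c2 : (flipMS n M).count (n + 1 - i + 1, n + 1 - i + (i + k + 1)) = 0 :=
      count_flip_high hM (by simp; omega)
    simp only [c1, c2, List.replicate_zero, List.append_nil]
  rw [h2, List.append_nil]
  apply List.flatMap_congr
  intro t0 ht0
  rw [List.mem_range] at ht0
  simp only [List.map_append, List.map_replicate]
  -- opening brackets
  have eop : ((n + 1 - i : ℕ), n + 1 - i + (t0 + 1) - 1) = flip n ((i - (t0 + 1) + 1 : ℕ), i) := by
    have e1 : n + 1 - i + (t0 + 1) - 1 = n + 1 - (i - (t0 + 1) + 1) := by omega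
    simp only [flip, e1]
  have hopc : (flipMS n M).count ((n + 1 - i : ℕ), n + 1 - i + (t0 + 1) - 1)
      = M.count ((i - (t0 + 1) + 1 : ℕ), i) := by
    rw [eop]
    exact count_flip hM (by simp) (by simp; omega) (by simp; omega)
  by_cases hti : t0 + 1 < i
  · -- closing brackets, generic case
    have ecl : ((n + 1 - i + 1 : ℕ), n + 1 - i + (t0 + 1)) = flip n ((i - (t0 + 1) : ℕ), i - 1) := by
      have e1 : n + 1 - i + 1 = n + 1 - (i - 1) := by omega
      have e2 : n + 1 - i + (t0 + 1) = n + 1 - (i - (t0 + 1)) := by omega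
      simp only [flip, e1, e2]
    have hclc : (flipMS n M).count ((n + 1 - i + 1 : ℕ), n + 1 - i + (t0 + 1))
        = M.count ((i - (t0 + 1) : ℕ), i - 1) := by
      rw [ecl]
      exact count_flip hM (by simp; omega) (by simp; omega) (by simp; omega)
    rw [hopc, hclc, eop, ecl]
  · have hti' : t0 + 1 = i := by omega
    have c1 : (flipMS n M).count ((n + 1 - i + 1 : ℕ), n + 1 - i + (t0 + 1)) = 0 :=
      count_flip_high hM (by simp; omega)
    have c2 : M.count ((i - (t0 + 1) : ℕ), i - 1) = 0 :=
      count_zero_invalid hM (by simp; omega)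
    rw [hopc, eop, c1, c2, List.replicate_zero, List.replicate_zero]

lemma lastCl_flip {n : ℕ} {M : MS} (hM : IsMS n M) {i : ℕ} (hi : 1 ≤ i) (hin : i ≤ n) :
    lastCl (SiStar n (flipMS n M) (n + 1 - i)) = Option.map (flip n) (lastCl (Si M i)) := by
  rw [SiStar_flip hM hi hin]
  unfold lastCl
  rw [scan_map]
  exact List.getLast?_map

lemma headOp_flip {n : ℕ} {M : MS} (hM : IsMS n M) {i : ℕ} (hi : 1 ≤ i) (hin : i ≤ n) :
    headOp (SiStar n (flipMS n M) (n + 1 - i)) = Option.map (flip n) (headOp (Si M i)) := by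
  rw [SiStar_flip hM hi hin]
  unfold headOp
  rw [scan_map]
  exact List.head?_map

end Stmt12Aux

open Stmt12Aux in
theorem stmt12 (n : ℕ) (M : MS) (hM : IsMS n M) (i : ℕ) (hi : 1 ≤ i) (hin : i ≤ n) :
    flipMS n (flipMS n M) = M ∧
    flipMS n (fM i M) = fMStar n (n + 1 - i) (flipMS n M) ∧
    Option.map (flipMS n) (eM i M) = eMStar n (n + 1 - i) (flipMS n M) := by
  have hlast := lastCl_flip hM hi hin
  have hhead := headOp_flip hM hi hin
  refine ⟨?_, ?_, ?_⟩
  · rw [flipMS_eq, flipMS_eq, Multiset.map_map]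
    conv_rhs => rw [← Multiset.map_id M]
    apply Multiset.map_congr rfl
    intro s hs
    obtain ⟨h1, h2, h3⟩ := hM s hs
    exact Prod.ext_iff.mpr ⟨show n + 1 - (n + 1 - s.1) = s.1 by omega,
      show n + 1 - (n + 1 - s.2) = s.2 by omega⟩
  · unfold fM fMStar
    cases h : lastCl (Si M i) with
    | none =>
      rw [h, Option.map_none] at hlast
      rw [hlast]
      show flipMS n (M + {(i, i)}) = flipMS n M + {((n + 1 - i : ℕ), n + 1 - i)}
      rw [flipMS_eq, flipMS_eq, Multiset.map_add, Multiset.map_singleton]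
      rfl
    | some s =>
      rw [h, Option.map_some] at hlast
      rw [hlast]
      have hsM : s ∈ M := mem_Si (lastCl_mem h)
      show flipMS n (M.erase s + {(s.1, i)})
        = (flipMS n M).erase (flip n s) + {((n + 1 - i : ℕ), (flip n s).2)}
      rw [flipMS_eq, flipMS_eq, Multiset.map_add, Multiset.map_singleton,
        map_erase' (flip n) hsM]
      rfl
  · unfold eM eMStar
    cases h : headOp (Si M i) with
    | none =>
      rw [h, Option.map_none] at hhead
      rw [hhead]
      rfl
    | some s =>
      rw [h, Option.map_some] at hhead
      rw [hhead]
      have hsM : s ∈ M := mem_Si (headOp_mem h)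
      obtain ⟨h1, h2, h3⟩ := hM s hsM
      show Option.map (flipMS n) (some (if s.1 = i then M.erase s else M.erase s + {(s.1, i - 1)}))
        = some (if (flip n s).2 = n + 1 - i then (flipMS n M).erase (flip n s)
            else (flipMS n M).erase (flip n s) + {((n + 1 - i + 1 : ℕ), (flip n s).2)})
      have hcond : ((flip n s).2 = n + 1 - i) ↔ s.1 = i := by
        show n + 1 - s.1 = n + 1 - i ↔ s.1 = i
        omega
      by_cases hc : s.1 = i
      · rw [if_pos hc, if_pos (hcond.mpr hc), Option.map_some]
        rw [flipMS_eq, flipMS_eq, map_erase' (flip n) hsM]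
      · rw [if_neg hc, if_neg (fun hx => hc (hcond.mp hx)), Option.map_some]
        rw [flipMS_eq, flipMS_eq, Multiset.map_add, Multiset.map_singleton,
          map_erase' (flip n) hsM]
        have he : flip n ((s.1 : ℕ), i - 1) = ((n + 1 - i + 1 : ℕ), (flip n s).2) :=
          Prod.ext_iff.mpr ⟨show n + 1 - (i - 1) = n + 1 - i + 1 by omega, rfl⟩
        rw [he]
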